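/- Let n, s_1, …, s_r be positive integers and q a complex number with [k]_q ≠ 0 for 1 ≤ k ≤ n. Then Σ_{k=1}^{n} C_q(n,k)·(−1)^k·q^{k(k+1)/2}·Σ_{1 ≤ k_1 < ⋯ < k_r = k} ∏_{i=1}^{r} q^{(s_i−1)k_i}/[k_i]_q^{s_i} = (−1)^r·Σ ∏_{i=1}^{w} q^{j_i}/[j_i]_q, where w = s_1+⋯+s_r and the sum on the right is over all 1 ≤ j_1 ≤ j_2 ≤ ⋯ ≤ j_w ≤ n satisfying j_i < j_{i+1} whenever i ∈ I = {s_1, s_1+s_2, …, s_1+⋯+s_{r−1}} (and j_i ≤ j_{i+1} otherwise). -/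

import Mathlib

open Finset

/-- The q-analog of a natural number: `[k]_q = (1 - q^k)/(1 - q)`. -/
noncomputable def qnum (q : ℂ) (k : ℕ) : ℂ := (1 - q ^ k) / (1 - q)

/-- Nested sum for `z_n`, recursing from the top index: the list is the
reversed tuple of exponents.  `zrev q n [s_r, …, s_1]`
`= Σ_{1 ≤ k_1 < ⋯ < k_r ≤ n} ∏ q^{(s_i-1)k_i}/[k_i]_q^{s_i}`. -/
noncomputable def zrev (q : ℂ) : ℕ → List ℕ → ℂ
  | _, [] => 1
  | n, s :: rest =>
      ∑ k ∈ Finset.Icc 1 n, q ^ ((s - 1) * k) / qnum q k ^ s * zrev q (k - 1) rest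

/-- `z n s ζ = z_n(s; ζ) = Σ_{1 ≤ k_1 < ⋯ < k_r ≤ n-1} ζ^{Σ (s_i-1)k_i} / ∏ [k_i]_ζ^{s_i}`. -/
noncomputable def z (ζ : ℂ) (n : ℕ) (s : List ℕ) : ℂ := zrev ζ (n - 1) s.reverse

/-- The Gaussian (q-)binomial coefficient `C_q(m,k) = ∏_{j=1}^k [m-j+1]_q/[j]_q`. -/
noncomputable def qbin (q : ℂ) (m k : ℕ) : ℂ :=
  ∏ j ∈ Finset.Icc 1 k, qnum q (m - j + 1) / qnum q j

/-- Nested mixed-inequality sum, recursing from the top index `j_w` down.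
Each `Bool` says whether the next lower index must be strictly smaller
(`true`) or only weakly smaller (`false`). -/
noncomputable def mixed (q : ℂ) : ℕ → List Bool → ℂ
  | _, [] => 1
  | n, b :: bs =>
      ∑ j ∈ Finset.Icc 1 n, q ^ j / qnum q j * mixed q (if b then j - 1 else j) bs

/-- The strictness pattern determined by the composition `s = (s_1,…,s_r)`:
reading the indices `j_w, …, j_1` from the top, inequalities are weak inside
each block `s_i` and strict between blocks (positions `I = {s_1, s_1+s_2, …}`). -/
def pattern (s : List ℕ) : List Bool :=
  s.reverse.flatMap fun si => List.replicate (si - 1) false ++ [true]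

lemma tri (k : ℕ) : k * (k + 1) / 2 = k * (k - 1) / 2 + k := by
  cases k with
  | zero => rfl
  | succ j =>
    have h : (j+1) * (j+1+1) = (j+1)*j + 2*(j+1) := by ring
    simp only [Nat.succ_sub_one]
    rw [h, Nat.add_mul_div_left _ _ (by norm_num : 0 < 2)]

lemma qnum_zero (q : ℂ) : qnum q 0 = 0 := by simp [qnum]

lemma qnum_split (q : ℂ) {k n : ℕ} (hk : k ≤ n) :
    qnum q n = qnum q (n - k) + q ^ (n - k) * qnum q k := by
  obtain ⟨m, rfl⟩ : ∃ m, n = m + k := ⟨n - k, (Nat.sub_add_cancel hk).symm⟩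
  simp only [Nat.add_sub_cancel, qnum]
  rw [← mul_div_assoc, ← add_div, pow_add]
  congr 1
  ring

noncomputable def qprod (q : ℂ) (m : ℕ) : ℂ := ∏ j ∈ Finset.Icc 1 m, qnum q j

lemma qprod_zero (q : ℂ) : qprod q 0 = 1 := by simp [qprod]

lemma qprod_succ (q : ℂ) (m : ℕ) : qprod q (m+1) = qprod q m * qnum q (m+1) := by
  rw [qprod, qprod, Finset.prod_Icc_succ_top (by omega)]

lemma qprod_ne {q : ℂ} {n : ℕ} (H : ∀ k, 1 ≤ k → k ≤ n → qnum q k ≠ 0) {m : ℕ} (h : m ≤ n) :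
    qprod q m ≠ 0 :=
  Finset.prod_ne_zero_iff.mpr fun j hj =>
    H j (Finset.mem_Icc.mp hj).1 (le_trans (Finset.mem_Icc.mp hj).2 h)

lemma qbin_eq {q : ℂ} {n k : ℕ} (hk : k ≤ n) (hne : qprod q (n - k) ≠ 0) :
    qbin q n k = qprod q n / (qprod q (n - k) * qprod q k) := by
  have h1 : qbin q n k = (∏ j ∈ Finset.Ioc (n-k) n, qnum q j) / qprod q k := by
    rw [qbin, Finset.prod_div_distrib, qprod]
    congr 1
    refine Finset.prod_nbij' (fun j => n - j + 1) (fun i => n - i + 1) ?_ ?_ ?_ ?_ ?_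
    · intro a ha; simp only [Finset.mem_Icc, Finset.mem_Ioc] at *; omega
    · intro a ha; simp only [Finset.mem_Icc, Finset.mem_Ioc] at *; omega
    · intro a ha; simp only [Finset.mem_Icc] at ha; show n - (n - a + 1) + 1 = a; omega
    · intro a ha; simp only [Finset.mem_Ioc] at ha; show n - (n - a + 1) + 1 = a; omega
    · intro a ha; rfl
  have h2 : qprod q n = qprod q (n - k) * ∏ j ∈ Finset.Ioc (n-k) n, qnum q j := by
    rw [qprod, qprod, show Finset.Icc 1 n = Finset.Ioc 0 n from by ext x; simp; omega,
      show Finset.Icc 1 (n-k) = Finset.Ioc 0 (n-k) from by ext x; simp; omega]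
    exact (Finset.prod_Ioc_consecutive _ (by omega) (by omega)).symm
  rw [h1, h2, mul_div_mul_left _ _ hne]

section
variable {q : ℂ} {n : ℕ} (H : ∀ k, 1 ≤ k → k ≤ n → qnum q k ≠ 0)

lemma qbin_zero (m : ℕ) : qbin q m 0 = 1 := by simp [qbin]

include H in
lemma qbin_diag : qbin q n n = 1 := by
  rw [qbin_eq le_rfl (by rw [Nat.sub_self, qprod_zero]; exact one_ne_zero),
    Nat.sub_self, qprod_zero, one_mul, div_self (qprod_ne H le_rfl)]

include H in
/-- Relation (A): `C(n-1,k-1) = [k]/[n] · C(n,k)`. -/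
lemma qbin_rel {k : ℕ} (h1 : 1 ≤ k) (h2 : k ≤ n) :
    qbin q (n-1) (k-1) = qnum q k / qnum q n * qbin q n k := by
  obtain ⟨n, rfl⟩ : ∃ m, n = m + 1 := ⟨n - 1, by omega⟩
  obtain ⟨k, rfl⟩ : ∃ m, k = m + 1 := ⟨k - 1, by omega⟩
  have hkn : k ≤ n := by omega
  have e1 : (n + 1) - (k + 1) = n - k := by omega
  rw [qbin_eq (by omega) (qprod_ne H (by omega)),
      qbin_eq (by omega) (by rw [e1]; exact qprod_ne H (by omega)), e1,
      Nat.add_sub_cancel, qprod_succ q n, qprod_succ q k]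
  have h1 : qprod q (n - k) ≠ 0 := qprod_ne H (by omega)
  have h2 : qprod q k ≠ 0 := qprod_ne H (by omega)
  have h3 : qprod q n ≠ 0 := qprod_ne H (by omega)
  have h4 : qnum q (n+1) ≠ 0 := H _ (by omega) le_rfl
  have h5 : qnum q (k+1) ≠ 0 := H _ (by omega) (by omega)
  simp only [Nat.add_sub_cancel]
  field_simp

include H in
/-- q-Pascal: `C(n,k) = C(n-1,k) + q^(n-k) C(n-1,k-1)`, for `1 ≤ k < n`. -/
lemma qbin_pascal {k : ℕ} (h1 : 1 ≤ k) (h2 : k < n) :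
    qbin q n k = qbin q (n-1) k + q^(n-k) * qbin q (n-1) (k-1) := by
  obtain ⟨n, rfl⟩ : ∃ m, n = m + 1 := ⟨n - 1, by omega⟩
  obtain ⟨k, rfl⟩ : ∃ m, k = m + 1 := ⟨k - 1, by omega⟩
  have hkn : k + 1 ≤ n := by omega
  have e1 : (n + 1) - (k + 1) = n - k := by omega
  have e2 : n - (k + 1) + 1 = n - k := by omega
  rw [qbin_eq (by omega) (by rw [e1]; exact qprod_ne H (by omega)),
      qbin_eq (by omega) (qprod_ne H (by omega)),
      qbin_eq (by omega) (qprod_ne H (by omega)), e1,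
      Nat.add_sub_cancel, Nat.add_sub_cancel,
      show qprod q (n+1) = qprod q n * qnum q (n+1) from qprod_succ q n,
      show qprod q (k+1) = qprod q k * qnum q (k+1) from qprod_succ q k,
      show qprod q (n-k) = qprod q (n - (k+1)) * qnum q (n-k) from by
        rw [← e2]; exact qprod_succ q _,
      qnum_split q (show k+1 ≤ n+1 by omega)]
  have h1 : qprod q (n - (k+1)) ≠ 0 := qprod_ne H (by omega)
  have h2 : qprod q k ≠ 0 := qprod_ne H (by omega)
  have h3 : qprod q n ≠ 0 := qprod_ne H (by omega)
  have h5 : qnum q (k+1) ≠ 0 := H _ (by omega) (by omega)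
  have h6 : qnum q (n-k) ≠ 0 := H _ (by omega) (by omega)
  have e3 : n + 1 - (k+1) = n - k := by omega
  rw [e3]
  field_simp

include H in
/-- q-Pascal (other form): `C(n,k) = q^k C(n-1,k) + C(n-1,k-1)`, for `1 ≤ k < n`. -/
lemma qbin_pascal' {k : ℕ} (h1 : 1 ≤ k) (h2 : k < n) :
    qbin q n k = q^k * qbin q (n-1) k + qbin q (n-1) (k-1) := by
  obtain ⟨n, rfl⟩ : ∃ m, n = m + 1 := ⟨n - 1, by omega⟩
  obtain ⟨k, rfl⟩ : ∃ m, k = m + 1 := ⟨k - 1, by omega⟩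
  have hkn : k + 1 ≤ n := by omega
  have e1 : (n + 1) - (k + 1) = n - k := by omega
  have e2 : n - (k + 1) + 1 = n - k := by omega
  rw [qbin_eq (by omega) (by rw [e1]; exact qprod_ne H (by omega)),
      qbin_eq (by omega) (qprod_ne H (by omega)),
      qbin_eq (by omega) (qprod_ne H (by omega)), e1,
      Nat.add_sub_cancel, Nat.add_sub_cancel,
      show qprod q (n+1) = qprod q n * qnum q (n+1) from qprod_succ q n,
      show qprod q (k+1) = qprod q k * qnum q (k+1) from qprod_succ q k,
      show qprod q (n-k) = qprod q (n - (k+1)) * qnum q (n-k) from by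
        rw [← e2]; exact qprod_succ q _,
      qnum_split q (show n-k ≤ n+1 by omega),
      show n + 1 - (n - k) = k + 1 by omega]
  have h1 : qprod q (n - (k+1)) ≠ 0 := qprod_ne H (by omega)
  have h2 : qprod q k ≠ 0 := qprod_ne H (by omega)
  have h3 : qprod q n ≠ 0 := qprod_ne H (by omega)
  have h5 : qnum q (k+1) ≠ 0 := H _ (by omega) (by omega)
  have h6 : qnum q (n-k) ≠ 0 := H _ (by omega) (by omega)
  field_simp
  ring
end

section
variable {q : ℂ} {n : ℕ} (H : ∀ k, 1 ≤ k → k ≤ n → qnum q k ≠ 0)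

include H in
lemma psum (hn : 1 ≤ n) : ∀ m, m ≤ n - 1 →
    ∑ k ∈ range (m+1), qbin q n k * ((-1:ℂ)^k * q^(k*(k-1)/2))
      = (-1)^m * q^(m*(m+1)/2) * qbin q (n-1) m := by
  intro m
  induction m with
  | zero => intro _; simp [qbin_zero]
  | succ m ih =>
    intro hm
    rw [Finset.sum_range_succ, ih (by omega),
      qbin_pascal' H (by omega) (by omega : m + 1 < n)]
    have e1 : (m+1) * (m+1-1)/2 = m*(m+1)/2 := by
      simp only [Nat.add_sub_cancel]; ring_nf
    have e2 : (m+1) * (m+1+1)/2 = m*(m+1)/2 + (m+1) := by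
      have := tri (m+1); simp only [Nat.add_sub_cancel] at this
      rw [this]; ring_nf
    simp only [Nat.add_sub_cancel]
    rw [e2, pow_add, pow_add, pow_add]
    ring

include H in
lemma fullsum (hn : 1 ≤ n) :
    ∑ k ∈ range (n+1), qbin q n k * ((-1:ℂ)^k * q^(k*(k-1)/2)) = 0 := by
  rw [Finset.sum_range_succ]
  obtain ⟨m, rfl⟩ : ∃ m, n = m + 1 := ⟨n - 1, by omega⟩
  rw [psum H hn m (by omega)]
  have H' : ∀ k, 1 ≤ k → k ≤ m → qnum q k ≠ 0 := fun k a b => H k a (by omega)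
  rw [qbin_diag H, show m + 1 - 1 = m from rfl, qbin_diag H']
  rw [show (m+1)*m/2 = m*(m+1)/2 from by ring_nf, pow_succ]
  ring

include H in
lemma tailsum (hn : 1 ≤ n) {m : ℕ} (hm : m ≤ n - 1) :
    ∑ k ∈ Icc (m+1) n, qbin q n k * ((-1:ℂ)^k * q^(k*(k-1)/2))
      = -((-1)^m * q^(m*(m+1)/2) * qbin q (n-1) m) := by
  rw [show Finset.Icc (m+1) n = Finset.Ico (m+1) (n+1) from by ext x; simp]
  have split := Finset.sum_Ico_consecutive (f := fun k => qbin q n k * ((-1:ℂ)^k * q^(k*(k-1)/2)))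
    (show 0 ≤ m + 1 by omega) (show m + 1 ≤ n + 1 by omega)
  rw [← Finset.range_eq_Ico] at split
  rw [psum H hn m hm] at split
  rw [← Finset.range_eq_Ico, fullsum H hn] at split
  linear_combination split
end

lemma mixed_nil (q : ℂ) (n : ℕ) : mixed q n [] = 1 := rfl

lemma mixed_cons (q : ℂ) (n : ℕ) (b : Bool) (bs : List Bool) :
    mixed q n (b :: bs) = ∑ j ∈ Finset.Icc 1 n, q ^ j / qnum q j
      * mixed q (if b then j - 1 else j) bs := rfl

lemma mixed_zero (q : ℂ) (b : Bool) (bs : List Bool) : mixed q 0 (b :: bs) = 0 := by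
  rw [mixed_cons]; simp

lemma mixed_succ (q : ℂ) (n : ℕ) (b : Bool) (bs : List Bool) :
    mixed q (n+1) (b :: bs) = mixed q n (b :: bs)
      + q ^ (n+1) / qnum q (n+1) * mixed q (if b then n else n+1) bs := by
  rw [mixed_cons, mixed_cons, Finset.sum_Icc_succ_top (by omega)]
  rfl

lemma zrev_nil (q : ℂ) (n : ℕ) : zrev q n [] = 1 := rfl

lemma zrev_cons (q : ℂ) (n : ℕ) (s : ℕ) (rest : List ℕ) :
    zrev q n (s :: rest) = ∑ k ∈ Finset.Icc 1 n,
      q ^ ((s - 1) * k) / qnum q k ^ s * zrev q (k - 1) rest := rfl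

lemma pattern_append (l : List ℕ) (s : ℕ) :
    pattern (l ++ [s]) = (List.replicate (s-1) false ++ [true]) ++ pattern l := by
  simp [pattern, List.reverse_append]

lemma pattern_one (l : List ℕ) : pattern (l ++ [1]) = true :: pattern l := by
  rw [pattern_append]; simp

lemma pattern_step (l : List ℕ) {s : ℕ} (hs : 2 ≤ s) :
    pattern (l ++ [s]) = false :: pattern (l ++ [s-1]) := by
  rw [pattern_append, pattern_append,
    show s - 1 = (s-2) + 1 from by omega, List.replicate_succ]
  simp

lemma pattern_ne_nil (l : List ℕ) (s : ℕ) : pattern (l ++ [s]) ≠ [] := by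
  rw [pattern_append]; simp

lemma main_lemma (q : ℂ) (w : ℕ) : ∀ (n : ℕ) (l : List ℕ) (sr : ℕ), 0 < sr →
    (∀ x ∈ l, 0 < x) → sr + l.sum ≤ w → (∀ k, 1 ≤ k → k ≤ n → qnum q k ≠ 0) →
    ∑ k ∈ Finset.Icc 1 n,
        qbin q n k * (-1) ^ k * q ^ (k * (k + 1) / 2)
          * (q ^ ((sr - 1) * k) / qnum q k ^ sr * zrev q (k - 1) l.reverse)
      = (-1) ^ (l.length + 1) * mixed q n (pattern (l ++ [sr])) := by
  induction w with
  | zero => intro n l sr hsr hl hw hq; omega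
  | succ w ihw =>
    intro n
    induction n with
    | zero =>
      intro l sr hsr hl hw hq
      obtain ⟨b, bs, hbs⟩ : ∃ b bs, pattern (l ++ [sr]) = b :: bs := by
        cases h : pattern (l ++ [sr]) with
        | nil => exact absurd h (pattern_ne_nil l sr)
        | cons b bs => exact ⟨b, bs, rfl⟩
      rw [hbs, mixed_zero]
      simp
    | succ n ihn =>
      intro l sr hsr hl hw hq
      have hqn : ∀ k, 1 ≤ k → k ≤ n → qnum q k ≠ 0 := fun k a b => hq k a (by omega)
      have hv : qnum q (n+1) ≠ 0 := hq (n+1) (by omega) le_rfl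
      -- Step 1: Pascal split of the binomial
      have step1 : ∑ k ∈ Finset.Icc 1 (n+1),
            qbin q (n+1) k * (-1) ^ k * q ^ (k * (k + 1) / 2)
              * (q ^ ((sr - 1) * k) / qnum q k ^ sr * zrev q (k - 1) l.reverse)
          = (∑ k ∈ Finset.Icc 1 n,
              qbin q n k * (-1) ^ k * q ^ (k * (k + 1) / 2)
                * (q ^ ((sr - 1) * k) / qnum q k ^ sr * zrev q (k - 1) l.reverse))
            + ∑ k ∈ Finset.Icc 1 (n+1), q ^ (n+1-k) * qbin q n (k-1)
                * ((-1) ^ k * q ^ (k * (k + 1) / 2)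
                  * (q ^ ((sr - 1) * k) / qnum q k ^ sr * zrev q (k - 1) l.reverse)) := by
        rw [Finset.sum_Icc_succ_top (show (1:ℕ) ≤ n+1 by omega),
            Finset.sum_Icc_succ_top (show (1:ℕ) ≤ n+1 by omega)]
        have e0 : ∀ k ∈ Finset.Icc 1 n,
            qbin q (n+1) k * (-1) ^ k * q ^ (k * (k + 1) / 2)
              * (q ^ ((sr - 1) * k) / qnum q k ^ sr * zrev q (k - 1) l.reverse)
            = qbin q n k * (-1) ^ k * q ^ (k * (k + 1) / 2)
                * (q ^ ((sr - 1) * k) / qnum q k ^ sr * zrev q (k - 1) l.reverse)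
              + q ^ (n+1-k) * qbin q n (k-1)
                * ((-1) ^ k * q ^ (k * (k + 1) / 2)
                  * (q ^ ((sr - 1) * k) / qnum q k ^ sr * zrev q (k - 1) l.reverse)) := by
          intro k hk
          simp only [Finset.mem_Icc] at hk
          have := qbin_pascal hq (k := k) (by omega) (by omega)
          simp only [Nat.add_sub_cancel] at this
          rw [this]
          ring
        rw [Finset.sum_congr rfl e0, Finset.sum_add_distrib]
        have d1 : qbin q (n+1) (n+1) = 1 := qbin_diag hq
        have d2 : qbin q n ((n+1)-1) = 1 := by
          simpa using qbin_diag hqn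
        rw [d1, d2, show n+1-(n+1) = 0 from by omega]
        ring
      rw [step1]
      rcases (show sr = 1 ∨ 2 ≤ sr by omega) with rfl | hs2
      · -- case sr = 1
        have step2 : ∀ k ∈ Finset.Icc 1 (n+1),
            q ^ (n+1-k) * qbin q n (k-1)
                * ((-1) ^ k * q ^ (k * (k + 1) / 2)
                  * (q ^ ((1 - 1) * k) / qnum q k ^ 1 * zrev q (k - 1) l.reverse))
            = q ^ (n+1) / qnum q (n+1)
                * (qbin q (n+1) k * ((-1) ^ k * q ^ (k * (k - 1) / 2))
                  * zrev q (k - 1) l.reverse) := by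
          intro k hk
          simp only [Finset.mem_Icc] at hk
          have hu : qnum q k ≠ 0 := hq k hk.1 hk.2
          have hrel := qbin_rel hq hk.1 hk.2
          simp only [Nat.add_sub_cancel] at hrel
          have epow : q ^ (n+1-k) * q ^ (k * (k + 1) / 2)
              = q ^ (n+1) * q ^ (k * (k - 1) / 2) := by
            rw [← pow_add, ← pow_add]
            congr 1
            have h := tri k
            have hk2 := hk.2
            generalize k * (k + 1) / 2 = A at h ⊢
            generalize k * (k - 1) / 2 = B at h ⊢
            omega
          rw [hrel, pow_one, show (1-1) * k = 0 from by omega, pow_zero]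
          calc q ^ (n+1-k) * (qnum q k / qnum q (n+1) * qbin q (n+1) k)
                * ((-1) ^ k * q ^ (k * (k + 1) / 2)
                  * (1 / qnum q k * zrev q (k - 1) l.reverse))
              = (q ^ (n+1-k) * q ^ (k * (k + 1) / 2))
                * (qnum q k / qnum q (n+1) * qbin q (n+1) k
                  * ((-1) ^ k * (1 / qnum q k * zrev q (k - 1) l.reverse))) := by
                ring
            _ = (q ^ (n+1) * q ^ (k * (k - 1) / 2))
                * (qnum q k / qnum q (n+1) * qbin q (n+1) k
                  * ((-1) ^ k * (1 / qnum q k * zrev q (k - 1) l.reverse))) := by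
                rw [epow]
            _ = q ^ (n+1) / qnum q (n+1)
                * (qbin q (n+1) k * ((-1) ^ k * q ^ (k * (k - 1) / 2))
                  * zrev q (k - 1) l.reverse) := by
                field_simp
        rw [Finset.sum_congr rfl step2, ← Finset.mul_sum]
        rw [ihn l 1 hsr hl hw hqn]
        cases hrev : l.reverse with
        | nil =>
          have hl0 : l = [] := by simpa using congrArg List.reverse hrev
          subst hl0
          simp only [List.reverse_nil, zrev_nil, mul_one]
          have tsum := tailsum hq (show 1 ≤ n+1 by omega) (show 0 ≤ n+1-1 by omega)
          norm_num [qbin_zero] at tsum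
          rw [tsum]
          rw [pattern_one [], show pattern [] = [] from rfl]
          rw [show mixed q (n+1) [true] = mixed q n [true]
                + q ^ (n+1) / qnum q (n+1) * mixed q n [] from
              by simpa using mixed_succ q n true []]
          rw [mixed_nil]
          simp only [List.length_nil, Nat.zero_add, List.nil_append]
          ring
        | cons s' t =>
          have hls : l = t.reverse ++ [s'] := by
            rw [← List.reverse_reverse l, hrev]; simp
          have hs' : 0 < s' := hl s' (by rw [hls]; simp)
          have hlt : ∀ x ∈ t.reverse, 0 < x := fun x hx =>
            hl x (by rw [hls]; exact List.mem_append_left _ hx)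
          have hwt : s' + (t.reverse).sum ≤ w := by
            have : l.sum = t.reverse.sum + s' := by rw [hls]; simp
            omega
          simp only [hrev, zrev_cons]
          have swap1 : ∀ k ∈ Finset.Icc 1 (n+1),
              qbin q (n+1) k * ((-1:ℂ)^k * q^(k*(k-1)/2))
                * (∑ m ∈ Finset.Icc 1 (k-1),
                    q ^ ((s' - 1) * m) / qnum q m ^ s' * zrev q (m - 1) t)
              = ∑ m ∈ Finset.Ico 1 k, qbin q (n+1) k * ((-1:ℂ)^k * q^(k*(k-1)/2))
                  * (q ^ ((s' - 1) * m) / qnum q m ^ s' * zrev q (m - 1) t) := by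
            intro k hk
            simp only [Finset.mem_Icc] at hk
            rw [Finset.mul_sum, show Finset.Icc 1 (k-1) = Finset.Ico 1 k from by
              rw [← Finset.Ico_add_one_right_eq_Icc]; congr 1; omega]
          rw [Finset.sum_congr rfl swap1,
            show Finset.Icc 1 (n+1) = Finset.Ico 1 (n+2) from (Finset.Ico_add_one_right_eq_Icc 1 (n+1)).symm,
            ← Finset.sum_Ico_Ico_comm', Finset.sum_Ico_succ_top (show 1 ≤ n+1 by omega)]
          rw [show Finset.Ico (n+1+1) (n+2) = (∅ : Finset ℕ) from Finset.Ico_self (n+2)]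
          rw [Finset.sum_empty, add_zero]
          have inner : ∀ m ∈ Finset.Ico 1 (n+1),
              (∑ k ∈ Finset.Ico (m+1) (n+2), qbin q (n+1) k * ((-1:ℂ)^k * q^(k*(k-1)/2))
                  * (q ^ ((s' - 1) * m) / qnum q m ^ s' * zrev q (m - 1) t))
              = -(qbin q n m * (-1:ℂ)^m * q^(m*(m+1)/2)
                  * (q ^ ((s' - 1) * m) / qnum q m ^ s' * zrev q (m - 1) t)) := by
            intro m hm
            simp only [Finset.mem_Ico] at hm
            rw [← Finset.sum_mul, show Finset.Ico (m+1) (n+2) = Finset.Icc (m+1) (n+1) from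
              Finset.Ico_add_one_right_eq_Icc (m+1) (n+1)]
            have tsum := tailsum hq (show 1 ≤ n+1 by omega) (show m ≤ n+1-1 by omega)
            simp only [Nat.add_sub_cancel] at tsum
            rw [tsum]
            ring
          rw [Finset.sum_congr rfl inner,
            show Finset.Ico 1 (n+1) = Finset.Icc 1 n from Finset.Ico_add_one_right_eq_Icc 1 n,
            Finset.sum_neg_distrib]
          have IH := ihw n t.reverse s' hs' hlt (by omega) hqn
          rw [List.reverse_reverse, ← hls] at IH
          rw [IH]
          have hlen : l.length = t.reverse.length + 1 := by rw [hls]; simp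
          rw [pattern_one l]
          rw [show mixed q (n+1) (true :: pattern l) = mixed q n (true :: pattern l)
                + q ^ (n+1) / qnum q (n+1) * mixed q n (pattern l) from
              by simpa using mixed_succ q n true (pattern l)]
          rw [hlen]
          ring
      · -- case sr = s + 2
        obtain ⟨s, rfl⟩ : ∃ s, sr = s + 2 := ⟨sr - 2, by omega⟩
        have step2 : ∀ k ∈ Finset.Icc 1 (n+1),
            q ^ (n+1-k) * qbin q n (k-1)
                * ((-1) ^ k * q ^ (k * (k + 1) / 2)
                  * (q ^ ((s + 2 - 1) * k) / qnum q k ^ (s+2) * zrev q (k - 1) l.reverse))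
            = q ^ (n+1) / qnum q (n+1)
                * (qbin q (n+1) k * (-1) ^ k * q ^ (k * (k + 1) / 2)
                  * (q ^ ((s + 1 - 1) * k) / qnum q k ^ (s+1) * zrev q (k - 1) l.reverse)) := by
          intro k hk
          simp only [Finset.mem_Icc] at hk
          have hu : qnum q k ≠ 0 := hq k hk.1 hk.2
          have hrel := qbin_rel hq hk.1 hk.2
          simp only [Nat.add_sub_cancel] at hrel
          have e1 : qnum q k ^ (s+2) = qnum q k ^ (s+1) * qnum q k := by rw [pow_succ]
          have epow : q ^ (n+1-k) * q ^ ((s + 2 - 1) * k) = q ^ (n+1) * q ^ ((s + 1 - 1) * k) := by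
            rw [← pow_add, ← pow_add]
            congr 1
            rw [show s + 2 - 1 = s + 1 from rfl, show s + 1 - 1 = s from rfl,
              Nat.succ_mul]
            omega
          rw [hrel, e1]
          calc q ^ (n+1-k) * (qnum q k / qnum q (n+1) * qbin q (n+1) k)
                * ((-1) ^ k * q ^ (k * (k + 1) / 2)
                  * (q ^ ((s + 2 - 1) * k) / (qnum q k ^ (s+1) * qnum q k) * zrev q (k - 1) l.reverse))
              = (q ^ (n+1-k) * q ^ ((s + 2 - 1) * k))
                * (qnum q k / qnum q (n+1) * qbin q (n+1) k
                  * ((-1) ^ k * q ^ (k * (k + 1) / 2)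
                  * (1 / (qnum q k ^ (s+1) * qnum q k) * zrev q (k - 1) l.reverse))) := by
                ring
            _ = (q ^ (n+1) * q ^ ((s + 1 - 1) * k))
                * (qnum q k / qnum q (n+1) * qbin q (n+1) k
                  * ((-1) ^ k * q ^ (k * (k + 1) / 2)
                  * (1 / (qnum q k ^ (s+1) * qnum q k) * zrev q (k - 1) l.reverse))) := by
                rw [epow]
            _ = q ^ (n+1) / qnum q (n+1)
                * (qbin q (n+1) k * (-1) ^ k * q ^ (k * (k + 1) / 2)
                  * (q ^ ((s + 1 - 1) * k) / qnum q k ^ (s+1) * zrev q (k - 1) l.reverse)) := by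
                field_simp
        rw [Finset.sum_congr rfl step2, ← Finset.mul_sum]
        rw [ihw (n+1) l (s+1) (by omega) hl (by omega) hq]
        rw [ihn l (s+2) (by omega) hl hw hqn]
        rw [pattern_step l (show 2 ≤ s+2 by omega), show s+2-1 = s+1 from rfl]
        rw [show mixed q (n+1) (false :: pattern (l ++ [s+1]))
              = mixed q n (false :: pattern (l ++ [s+1]))
                + q ^ (n+1) / qnum q (n+1) * mixed q (n+1) (pattern (l ++ [s+1])) from
            by simpa using mixed_succ q n false (pattern (l ++ [s+1]))]
        ring

/-- Theorem A of Hessami Pilehrood–Hessami Pilehrood–Tauraso: here the tuple is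
`s = (s_1, …, s_{r-1}, s_r)` with `(s_1, …, s_{r-1})` given by `l` and `s_r = sr`;
the inner sum over `1 ≤ k_1 < ⋯ < k_r = k` is written with the top index fixed. -/
theorem stmt11 (n : ℕ) (hn : 0 < n) (q : ℂ)
    (hq : ∀ k, 1 ≤ k → k ≤ n → qnum q k ≠ 0)
    (l : List ℕ) (sr : ℕ) (hsr : 0 < sr) (hl : ∀ x ∈ l, 0 < x) :
    ∑ k ∈ Finset.Icc 1 n,
        qbin q n k * (-1) ^ k * q ^ (k * (k + 1) / 2)
          * (q ^ ((sr - 1) * k) / qnum q k ^ sr * zrev q (k - 1) l.reverse)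
      = (-1) ^ (l.length + 1) * mixed q n (pattern (l ++ [sr])) :=
  main_lemma q (sr + l.sum) n l sr hsr hl le_rfl hq
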